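/- If S² = E₁ ∪ E₂ ∪ E₃ ∪ E₄ is an orthogonal 4-coloring of the unit sphere, then there is no great circle of S² that intersects all four color classes. -/

import Mathlib

theorem stmt_7 (E : Fin 4 → Set (EuclideanSpace ℝ (Fin 3)))
    (hunion : (⋃ i, E i) = {x : EuclideanSpace ℝ (Fin 3) | ‖x‖ = 1})
    (hdisj : ∀ i j, i ≠ j → Disjoint (E i) (E j))
    (hne : ∀ i, (E i).Nonempty)
    (horth : ∀ i, ∀ u ∈ E i, ∀ v ∈ E i, (inner ℝ u v : ℝ) ≠ 0) :
    ¬ ∃ n : EuclideanSpace ℝ (Fin 3), ‖n‖ = 1 ∧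
      ∀ i, ∃ x ∈ E i, (inner ℝ x n : ℝ) = 0 := by
  rintro ⟨n, hn, h⟩
  have hn' : n ∈ ⋃ i, E i := by rw [hunion]; exact hn
  obtain ⟨i, hi⟩ := Set.mem_iUnion.mp hn'
  obtain ⟨x, hx, hxn⟩ := h i
  exact horth i x hx n hi hxn
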